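/- (Gauss) Let r ∈ (0,1) and define the arithmetic–geometric mean sequences a₀ = 1, b₀ = r' = √(1-r²), a_{n+1} = (a_n + b_n)/2, b_{n+1} = √(a_n·b_n). Then the sequences (a_n) and (b_n) converge to a common limit AG(1,r'), and 𝒦(r) = π/(2·AG(1,r')). -/

import Mathlib

/-- Descending Landen sequence: `descL r p = L(r,-p)`. -/
noncomputable def descL (r : ℝ) : ℕ → ℝ
  | 0 => r
  | p + 1 => (descL r p / (1 + Real.sqrt (1 - (descL r p) ^ 2))) ^ 2

/-- Ascending Landen sequence: `ascL r p = L(r,p)`. -/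
noncomputable def ascL (r : ℝ) : ℕ → ℝ
  | 0 => r
  | p + 1 => 2 * Real.sqrt (ascL r p) / (1 + ascL r p)

/-- Complete elliptic integral of the first kind. -/
noncomputable def ellK (r : ℝ) : ℝ :=
  ∫ x in (0:ℝ)..1, 1 / Real.sqrt ((1 - x ^ 2) * (1 - r ^ 2 * x ^ 2))

/-- Arithmetic–geometric mean iteration: `agm a b n = (aₙ, bₙ)`. -/
noncomputable def agm (a b : ℝ) : ℕ → ℝ × ℝ
  | 0 => (a, b)
  | n + 1 => (((agm a b n).1 + (agm a b n).2) / 2,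
      Real.sqrt ((agm a b n).1 * (agm a b n).2))

section GaussAGM
open MeasureTheory Real Set Filter


noncomputable def Jint (a b : ℝ) : ℝ :=
  ∫ t in Set.Ioi (0:ℝ), (Real.sqrt ((t^2+a^2)*(t^2+b^2)))⁻¹

lemma integrable_inv_sq_add_sq {c : ℝ} (hc : 0 < c) :
    Integrable (fun t : ℝ => (t^2+c^2)⁻¹) := by
  have h := (integrable_inv_one_add_sq).comp_div (R := c) hc.ne'
  have h2 := h.const_mul (c^2)⁻¹
  refine h2.congr (Eventually.of_forall fun t => ?_)
  simp only
  rw [← mul_inv]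
  congr 1
  field_simp
  ring

lemma Jcont {a b : ℝ} (ha : 0 < a) (hb : 0 < b) :
    Continuous (fun t : ℝ => (Real.sqrt ((t^2+a^2)*(t^2+b^2)))⁻¹) := by
  refine Continuous.inv₀ (Real.continuous_sqrt.comp (by continuity)) fun t => ?_
  have h1 : 0 < (t^2+a^2)*(t^2+b^2) := by positivity
  positivity

lemma sqrt_prod_ge {a b m t : ℝ} (hm : 0 < m) (hma : m ≤ a) (hmb : m ≤ b) :
    (t^2+m^2) ≤ Real.sqrt ((t^2+a^2)*(t^2+b^2)) := by
  have h2 : (t^2+m^2)^2 ≤ (t^2+a^2)*(t^2+b^2) := by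
    have h3 : m^2 ≤ a^2 := by nlinarith
    have h4 : m^2 ≤ b^2 := by nlinarith
    nlinarith [sq_nonneg t]
  rw [show t^2+m^2 = Real.sqrt ((t^2+m^2)^2) from (Real.sqrt_sq (by positivity)).symm]
  exact Real.sqrt_le_sqrt h2

lemma Jint_integrable {a b : ℝ} (ha : 0 < a) (hb : 0 < b) :
    Integrable (fun t : ℝ => (Real.sqrt ((t^2+a^2)*(t^2+b^2)))⁻¹) := by
  set m := min a b with hm
  have hmpos : 0 < m := lt_min ha hb
  refine Integrable.mono (integrable_inv_sq_add_sq hmpos)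
    (Jcont ha hb).aestronglyMeasurable (Eventually.of_forall fun t => ?_)
  have h1 : (0:ℝ) < t^2 + m^2 := by positivity
  rw [norm_inv, norm_inv, Real.norm_of_nonneg (Real.sqrt_nonneg _),
    Real.norm_of_nonneg h1.le]
  exact inv_anti₀ h1 (sqrt_prod_ge hmpos (min_le_left a b) (min_le_right a b))

lemma Jint_integrableOn {a b : ℝ} (ha : 0 < a) (hb : 0 < b) :
    IntegrableOn (fun t : ℝ => (Real.sqrt ((t^2+a^2)*(t^2+b^2)))⁻¹) (Set.Ioi 0) :=
  (Jint_integrable ha hb).integrableOn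

lemma Jint_self {c : ℝ} (hc : 0 < c) : Jint c c = Real.pi / (2*c) := by
  have h1 : ∀ t : ℝ, (Real.sqrt ((t^2+c^2)*(t^2+c^2)))⁻¹ = (t^2+c^2)⁻¹ := by
    intro t
    rw [Real.sqrt_mul_self (by positivity)]
  unfold Jint
  simp_rw [h1]
  have key : ∀ t : ℝ, (t^2+c^2)⁻¹ = (fun x : ℝ => (c^2)⁻¹ * (1+x^2)⁻¹) (c⁻¹ * t) := by
    intro t
    simp only
    rw [← mul_inv]
    congr 1
    field_simp
    ring
  simp_rw [key]
  rw [MeasureTheory.integral_comp_mul_left_Ioi (fun x : ℝ => (c^2)⁻¹ * (1+x^2)⁻¹) 0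
    (by positivity : (0:ℝ) < c⁻¹), mul_zero]
  rw [MeasureTheory.integral_const_mul, integral_Ioi_inv_one_add_sq]
  simp only [Real.arctan_zero, sub_zero, smul_eq_mul]
  field_simp

lemma Jint_le {a b : ℝ} (hb : 0 < b) (hba : b ≤ a) : Jint a b ≤ Real.pi / (2*b) := by
  have ha : 0 < a := hb.trans_le hba
  rw [← Jint_self hb]
  unfold Jint
  refine setIntegral_mono_on (Jint_integrableOn ha hb) (Jint_integrableOn hb hb)
    measurableSet_Ioi fun t _ => ?_
  have h1 : (0:ℝ) < (t^2+b^2)*(t^2+b^2) := by positivity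
  refine inv_anti₀ (Real.sqrt_pos.mpr h1) (Real.sqrt_le_sqrt ?_)
  nlinarith [sq_nonneg t, hb.le, mul_self_le_mul_self hb.le hba]

lemma le_Jint {a b : ℝ} (hb : 0 < b) (hba : b ≤ a) : Real.pi / (2*a) ≤ Jint a b := by
  have ha : 0 < a := hb.trans_le hba
  rw [← Jint_self ha]
  unfold Jint
  refine setIntegral_mono_on (Jint_integrableOn ha ha) (Jint_integrableOn ha hb)
    measurableSet_Ioi fun t _ => ?_
  have h1 : (0:ℝ) < (t^2+a^2)*(t^2+b^2) := by positivity
  refine inv_anti₀ (Real.sqrt_pos.mpr h1) (Real.sqrt_le_sqrt ?_)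
  nlinarith [sq_nonneg t, hb.le, mul_self_le_mul_self hb.le hba]

lemma Jint_agm_step {a b : ℝ} (ha : 0 < a) (hb : 0 < b) :
    Jint ((a+b)/2) (Real.sqrt (a*b)) = Jint a b := by
  have hab : 0 < a*b := mul_pos ha hb
  have hA : 0 < (a+b)/2 := by linarith
  have hG : 0 < Real.sqrt (a*b) := Real.sqrt_pos.mpr hab
  set g : ℝ → ℝ := fun u => (Real.sqrt ((u^2+((a+b)/2)^2)*(u^2+(Real.sqrt (a*b))^2)))⁻¹ with hg
  set f : ℝ → ℝ := fun t => (t - a*b/t)/2 with hf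
  -- derivative
  have hderiv : ∀ t ∈ Set.Ioi (0:ℝ), HasDerivWithinAt f ((1 + a*b/t^2)/2) (Set.Ioi 0) t := by
    intro t ht
    have ht' : t ≠ 0 := (Set.mem_Ioi.mp ht).ne'
    have h := (((hasDerivAt_id t).sub ((hasDerivAt_inv ht').const_mul (a*b))).div_const 2)
    have he : (1 - a*b * -(t^2)⁻¹)/2 = (1 + a*b/t^2)/2 := by field_simp; ring
    rw [he] at h
    exact h.hasDerivWithinAt
  -- injectivity
  have hmono : StrictMonoOn f (Set.Ioi 0) := by
    intro x hx y hy hxy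
    simp only [hf]
    have h2 : a*b/y < a*b/x := div_lt_div_of_pos_left hab hx hxy
    linarith
  -- image
  have himg : f '' (Set.Ioi 0) = Set.univ := by
    refine eq_univ_iff_forall.mpr fun u => ?_
    set s := Real.sqrt (u^2 + a*b) with hs
    have hs2 : s^2 = u^2 + a*b := Real.sq_sqrt (by positivity)
    have habs : |u| < s := by
      rw [hs, ← Real.sqrt_sq_eq_abs]
      exact Real.sqrt_lt_sqrt (sq_nonneg u) (by linarith)
    have ht : 0 < u + s := by
      have := neg_abs_le u
      linarith
    refine ⟨u + s, ht, ?_⟩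
    have htne : u + s ≠ 0 := ht.ne'
    simp only [hf]
    field_simp
    ring_nf
    nlinarith [hs2]
  -- change of variables
  have hsub := MeasureTheory.integral_image_eq_integral_abs_deriv_smul measurableSet_Ioi
    hderiv hmono.injOn g
  rw [himg] at hsub
  -- pointwise identity on the RHS
  have hpt : ∀ t ∈ Set.Ioi (0:ℝ),
      |(1 + a*b/t^2)/2| • g (f t) = 2 * (Real.sqrt ((t^2+a^2)*(t^2+b^2)))⁻¹ := by
    intro t ht
    have ht0 : 0 < t := ht
    have hG2 : (Real.sqrt (a*b))^2 = a*b := Real.sq_sqrt hab.le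
    have hP : (0:ℝ) < (t^2+a^2)*(t^2+b^2) := by positivity
    simp only [hg, hf, smul_eq_mul]
    set P := (t^2+a^2)*(t^2+b^2) with hPdef
    have h1 : ((t - a*b/t)/2)^2+((a+b)/2)^2 = P / (2*t)^2 := by
      rw [hPdef]; field_simp; ring
    have h2 : ((t - a*b/t)/2)^2+(Real.sqrt (a*b))^2 = ((t^2+a*b)/(2*t))^2 := by
      rw [hG2]; field_simp; ring
    rw [h1, h2, Real.sqrt_mul (by positivity), Real.sqrt_div hP.le,
      Real.sqrt_sq (by positivity), Real.sqrt_sq (by positivity), abs_of_pos (by positivity)]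
    have hsP : 0 < Real.sqrt P := Real.sqrt_pos.mpr hP
    field_simp
  rw [MeasureTheory.setIntegral_congr_fun measurableSet_Ioi hpt] at hsub
  -- evenness: integral over univ = 2 * integral over Ioi 0
  have heven : ∀ u : ℝ, g (-u) = g u := by
    intro u; simp only [hg, neg_sq]
  have hIic : ∫ u in Set.Iic (0:ℝ), g u = ∫ u in Set.Ioi (0:ℝ), g u := by
    rw [show Set.Iic (0:ℝ) = Set.Iic (-0 : ℝ) by norm_num, ← integral_comp_neg_Ioi]
    exact setIntegral_congr_fun measurableSet_Ioi fun u _ => heven u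
  have hgint : Integrable g := by
    have := Jint_integrable hA hG
    exact this
  have hsplit : ∫ u, g u = (∫ u in Set.Iic (0:ℝ), g u) + ∫ u in Set.Ioi (0:ℝ), g u :=
    (intervalIntegral.integral_Iic_add_Ioi hgint.integrableOn hgint.integrableOn).symm
  rw [Measure.restrict_univ, hsplit, hIic, ← two_mul,
    MeasureTheory.integral_const_mul] at hsub
  have : Jint ((a+b)/2) (Real.sqrt (a*b)) = ∫ u in Set.Ioi (0:ℝ), g u := rfl
  rw [this]
  have hJ : Jint a b = ∫ t in Set.Ioi (0:ℝ), (Real.sqrt ((t^2+a^2)*(t^2+b^2)))⁻¹ := rfl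
  rw [hJ]
  have h2ne : (2:ℝ) ≠ 0 := two_ne_zero
  field_simp at hsub ⊢
  linarith [hsub]

lemma ellK_eq_Jint {r : ℝ} (hr : r ∈ Set.Ioo (0:ℝ) 1) :
    ellK r = Jint 1 (Real.sqrt (1 - r^2)) := by
  obtain ⟨hr0, hr1⟩ := hr
  have hb2 : (Real.sqrt (1-r^2))^2 = 1 - r^2 := Real.sq_sqrt (by nlinarith)
  have hbpos : 0 < Real.sqrt (1-r^2) := Real.sqrt_pos.mpr (by nlinarith)
  set b := Real.sqrt (1-r^2) with hbdef
  set g : ℝ → ℝ := fun x => 1 / Real.sqrt ((1 - x ^ 2) * (1 - r ^ 2 * x ^ 2)) with hg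
  set f : ℝ → ℝ := fun t => (Real.sqrt (1+t^2))⁻¹ with hf
  have hsq : ∀ t : ℝ, 0 < Real.sqrt (1+t^2) := fun t => Real.sqrt_pos.mpr (by positivity)
  have hsq2 : ∀ t : ℝ, (Real.sqrt (1+t^2))^2 = 1+t^2 := fun t => Real.sq_sqrt (by positivity)
  -- derivative
  have hderiv : ∀ t ∈ Set.Ioi (0:ℝ),
      HasDerivWithinAt f (-(t/(Real.sqrt (1+t^2)*(1+t^2)))) (Set.Ioi 0) t := by
    intro t ht
    have h1 : (0:ℝ) < 1 + t^2 := by positivity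
    have hinner : HasDerivAt (fun t : ℝ => 1+t^2) (2*t) t := by
      simpa using ((hasDerivAt_pow 2 t).const_add 1)
    have hs := (Real.hasDerivAt_sqrt h1.ne').comp t hinner
    have hi := hs.inv (hsq t).ne'
    have he : -(1 / (2 * Real.sqrt (1+t^2)) * (2*t)) / (Real.sqrt (1+t^2))^2
        = -(t/(Real.sqrt (1+t^2)*(1+t^2))) := by
      rw [hsq2 t]
      field_simp
    simp only [Function.comp] at hi
    rw [he] at hi
    exact hi.hasDerivWithinAt
  -- injectivity
  have hanti : StrictAntiOn f (Set.Ioi 0) := by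
    intro x hx y hy hxy
    simp only [hf]
    have hx0 : 0 < x := hx
    have h2 : Real.sqrt (1+x^2) < Real.sqrt (1+y^2) :=
      Real.sqrt_lt_sqrt (by positivity) (by nlinarith)
    exact inv_strictAnti₀ (hsq x) h2
  -- image
  have himg : f '' (Set.Ioi 0) = Set.Ioo 0 1 := by
    ext x
    constructor
    · rintro ⟨t, ht, rfl⟩
      have ht0 : 0 < t := ht
      refine ⟨by positivity, ?_⟩
      have h3 : 1 < Real.sqrt (1+t^2) := by
        have := Real.sqrt_lt_sqrt (le_of_lt one_pos) (by nlinarith : (1:ℝ) < 1+t^2)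
        rwa [Real.sqrt_one] at this
      simp only [hf]
      rw [inv_lt_one_iff₀]
      right
      exact h3
    · rintro ⟨hx0, hx1⟩
      have hx2 : 0 < x⁻¹^2 - 1 := by
        have : 1 < x⁻¹ := (one_lt_inv₀ hx0).mpr hx1
        nlinarith
      refine ⟨Real.sqrt (x⁻¹^2 - 1), Real.sqrt_pos.mpr hx2, ?_⟩
      simp only [hf]
      rw [Real.sq_sqrt hx2.le, show 1 + (x⁻¹^2 - 1) = x⁻¹^2 by ring,
        Real.sqrt_sq (by positivity), inv_inv]
  -- change of variables
  have hsub := MeasureTheory.integral_image_eq_integral_abs_deriv_smul measurableSet_Ioi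
    hderiv hanti.injOn g
  rw [himg] at hsub
  -- pointwise identity
  have hpt : ∀ t ∈ Set.Ioi (0:ℝ),
      |(-(t/(Real.sqrt (1+t^2)*(1+t^2))))| • g (f t)
        = (Real.sqrt ((t^2+1^2)*(t^2+b^2)))⁻¹ := by
    intro t ht
    have ht0 : 0 < t := ht
    have h1 : (0:ℝ) < 1 + t^2 := by positivity
    simp only [hg, hf, smul_eq_mul, abs_neg, abs_of_pos (by positivity : (0:ℝ) < t/(Real.sqrt (1+t^2)*(1+t^2)))]
    have hx2 : ((Real.sqrt (1+t^2))⁻¹)^2 = (1+t^2)⁻¹ := by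
      rw [inv_pow, hsq2 t]
    rw [hx2]
    have e1 : 1 - (1+t^2)⁻¹ = t^2/(1+t^2) := by field_simp; ring
    have e2 : 1 - r^2 * (1+t^2)⁻¹ = (t^2+b^2)/(1+t^2) := by
      rw [hb2]; field_simp; ring
    rw [e1, e2, show t^2/(1+t^2) * ((t^2+b^2)/(1+t^2)) = (t/(1+t^2))^2 * (t^2+b^2) by ring,
      Real.sqrt_mul (sq_nonneg _), Real.sqrt_sq (by positivity),
      show (t^2+1^2)*(t^2+b^2) = (1+t^2)*(t^2+b^2) by ring,
      Real.sqrt_mul h1.le]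
    have hsb : 0 < Real.sqrt (t^2+b^2) := Real.sqrt_pos.mpr (by positivity)
    set s1 := Real.sqrt (1+t^2) with hs1
    set s2 := Real.sqrt (t^2+b^2) with hs2d
    rw [← hsq2 t]
    have hs1p : 0 < s1 := hsq t
    field_simp
  rw [MeasureTheory.setIntegral_congr_fun measurableSet_Ioi hpt] at hsub
  have hellK : ellK r = ∫ x in Set.Ioo (0:ℝ) 1, g x := by
    unfold ellK
    rw [intervalIntegral.integral_of_le zero_le_one,
      MeasureTheory.integral_Ioc_eq_integral_Ioo]
  rw [hellK, hsub]
  rfl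

variable {a b : ℝ}

lemma agm_pos_le (hb : 0 < b) (hba : b ≤ a) :
    ∀ n, 0 < (agm a b n).2 ∧ (agm a b n).2 ≤ (agm a b n).1 := by
  intro n
  induction n with
  | zero => exact ⟨hb, hba⟩
  | succ n ih =>
    obtain ⟨hy, hyx⟩ := ih
    set x := (agm a b n).1
    set y := (agm a b n).2
    have hx : 0 < x := lt_of_lt_of_le hy hyx
    have hs : 0 < Real.sqrt (x*y) := Real.sqrt_pos.mpr (by positivity)
    refine ⟨hs, ?_⟩
    show Real.sqrt (x*y) ≤ (x+y)/2
    have h1 : Real.sqrt (x*y)^2 = x*y := Real.sq_sqrt (by positivity)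
    nlinarith [Real.sqrt_nonneg (x*y), sq_nonneg (x-y)]

lemma agm_fst_antitone (hb : 0 < b) (hba : b ≤ a) :
    Antitone (fun n => (agm a b n).1) := by
  refine antitone_nat_of_succ_le fun n => ?_
  have h := agm_pos_le hb hba n
  show ((agm a b n).1 + (agm a b n).2)/2 ≤ (agm a b n).1
  linarith [h.2]

lemma agm_snd_monotone (hb : 0 < b) (hba : b ≤ a) :
    Monotone (fun n => (agm a b n).2) := by
  refine monotone_nat_of_le_succ fun n => ?_
  have h := agm_pos_le hb hba n
  show (agm a b n).2 ≤ Real.sqrt ((agm a b n).1 * (agm a b n).2)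
  have h2 := Real.sqrt_le_sqrt (show (agm a b n).2 * (agm a b n).2 ≤ (agm a b n).1 * (agm a b n).2 by nlinarith [h.1, h.2])
  rwa [Real.sqrt_mul_self h.1.le] at h2

lemma agm_snd_le_fst_zero (hb : 0 < b) (hba : b ≤ a) (n : ℕ) :
    (agm a b n).1 ≤ a ∧ b ≤ (agm a b n).2 :=
  ⟨agm_fst_antitone hb hba (Nat.zero_le n), agm_snd_monotone hb hba (Nat.zero_le n)⟩

lemma agm_tendsto (hb : 0 < b) (hba : b ≤ a) :
    ∃ ℓ : ℝ, b ≤ ℓ ∧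
      Filter.Tendsto (fun n => (agm a b n).1) Filter.atTop (nhds ℓ) ∧
      Filter.Tendsto (fun n => (agm a b n).2) Filter.atTop (nhds ℓ) := by
  have hbdd1 : BddBelow (Set.range fun n => (agm a b n).1) :=
    ⟨b, by rintro _ ⟨n, rfl⟩; exact le_trans (agm_snd_le_fst_zero hb hba n).2 (agm_pos_le hb hba n).2⟩
  have hbdd2 : BddAbove (Set.range fun n => (agm a b n).2) :=
    ⟨a, by rintro _ ⟨n, rfl⟩; exact le_trans (agm_pos_le hb hba n).2 (agm_snd_le_fst_zero hb hba n).1⟩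
  have h1 := tendsto_atTop_ciInf (agm_fst_antitone hb hba) hbdd1
  have h2 := tendsto_atTop_ciSup (agm_snd_monotone hb hba) hbdd2
  set la := ⨅ n, (agm a b n).1
  set lb := ⨆ n, (agm a b n).2
  have heq : la = lb := by
    have hshift : Filter.Tendsto (fun n => (agm a b (n+1)).1) Filter.atTop (nhds la) :=
      h1.comp (tendsto_add_atTop_nat 1)
    have hsum : Filter.Tendsto (fun n => ((agm a b n).1 + (agm a b n).2)/2)
        Filter.atTop (nhds ((la + lb)/2)) := (h1.add h2).div_const 2
    have : la = (la + lb)/2 := tendsto_nhds_unique hshift hsum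
    linarith
  refine ⟨lb, ?_, heq ▸ h1, h2⟩
  exact le_ciSup hbdd2 0


theorem gauss_ellK_eq_pi_div_agm (r : ℝ) (hr : r ∈ Set.Ioo (0:ℝ) 1) :
    ∃ ℓ : ℝ,
      Filter.Tendsto (fun n => (agm 1 (Real.sqrt (1 - r ^ 2)) n).1)
        Filter.atTop (nhds ℓ) ∧
      Filter.Tendsto (fun n => (agm 1 (Real.sqrt (1 - r ^ 2)) n).2)
        Filter.atTop (nhds ℓ) ∧
      ellK r = Real.pi / (2 * ℓ) := by
  obtain ⟨hr0, hr1⟩ := hr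
  set b := Real.sqrt (1 - r ^ 2) with hbdef
  have hb : 0 < b := Real.sqrt_pos.mpr (by nlinarith)
  have hb1 : b ≤ 1 := by
    have h := Real.sqrt_le_sqrt (show 1 - r^2 ≤ 1 by nlinarith)
    rwa [Real.sqrt_one] at h
  obtain ⟨ℓ, hℓb, hA, hB⟩ := agm_tendsto hb hb1
  have hℓ : 0 < ℓ := lt_of_lt_of_le hb hℓb
  -- invariance of Jint along the AGM iteration
  have hinv : ∀ n, Jint (agm 1 b n).1 (agm 1 b n).2 = Jint 1 b := by
    intro n
    induction n with
    | zero => rfl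
    | succ n ih =>
      have h := agm_pos_le hb hb1 n
      have hx : 0 < (agm 1 b n).1 := lt_of_lt_of_le h.1 h.2
      have : (agm 1 b (n+1)).1 = ((agm 1 b n).1 + (agm 1 b n).2)/2 := rfl
      rw [this, show (agm 1 b (n+1)).2 = Real.sqrt ((agm 1 b n).1 * (agm 1 b n).2) from rfl,
        Jint_agm_step hx h.1, ih]
  -- squeeze
  have hle : ∀ n, Real.pi / (2 * (agm 1 b n).1) ≤ Jint 1 b := by
    intro n
    rw [← hinv n]
    exact le_Jint (agm_pos_le hb hb1 n).1 (agm_pos_le hb hb1 n).2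
  have hge : ∀ n, Jint 1 b ≤ Real.pi / (2 * (agm 1 b n).2) := by
    intro n
    rw [← hinv n]
    exact Jint_le (agm_pos_le hb hb1 n).1 (agm_pos_le hb hb1 n).2
  have t1 : Filter.Tendsto (fun n => Real.pi / (2 * (agm 1 b n).1)) Filter.atTop
      (nhds (Real.pi / (2 * ℓ))) :=
    tendsto_const_nhds.div (tendsto_const_nhds.mul hA) (by positivity)
  have t2 : Filter.Tendsto (fun n => Real.pi / (2 * (agm 1 b n).2)) Filter.atTop
      (nhds (Real.pi / (2 * ℓ))) :=
    tendsto_const_nhds.div (tendsto_const_nhds.mul hB) (by positivity)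
  have h1 : Real.pi / (2 * ℓ) ≤ Jint 1 b :=
    le_of_tendsto t1 (Eventually.of_forall hle)
  have h2 : Jint 1 b ≤ Real.pi / (2 * ℓ) :=
    ge_of_tendsto t2 (Eventually.of_forall hge)
  exact ⟨ℓ, hA, hB, by rw [ellK_eq_Jint ⟨hr0, hr1⟩, le_antisymm h2 h1]⟩

end GaussAGM
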